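/- arXiv:2512.02354 — 7 statements merged into one kernel-verified Lean document; each statement's English description precedes it below -/
import Mathlib

section
/- Let μ be a Borel probability measure on ℝ whose support is an interval S with nonempty interior, let φ : ℝ → ℝ be μ-integrable, continuous, and strictly increasing on S, let p be an interior point of S, and let B ∈ ℝ. Then the following are equivalent: (i) B = φ(p); (ii) for every measurable function x : ℝ → [0,1], ∫ (φ(v) − B)·𝟙[v ≥ p] dμ(v) ≥ ∫ (φ(v) − B)·x(v) dμ(v). -/
open MeasureTheory Set

/-- a.e. every point lies in the support set `S`. -/
lemma ae_mem_of_supp (μ : Measure ℝ) (S : Set ℝ)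
    (hS_supp : ∀ x : ℝ, x ∈ S ↔ ∀ U ∈ nhds x, 0 < μ U) :
    ∀ᵐ v ∂μ, v ∈ S := by
  rw [Filter.eventually_iff, mem_ae_iff]
  apply measure_null_of_locally_null
  intro x hx
  simp only [mem_compl_iff, mem_setOf_eq, hS_supp x] at hx
  push_neg at hx
  obtain ⟨U, hU, hU0⟩ := hx
  exact ⟨U, nhdsWithin_le_nhds hU, le_antisymm hU0 bot_le⟩

/-- rewrite the integral against a threshold indicator as a set integral. -/
lemma integral_mul_ite (μ : Measure ℝ) (f : ℝ → ℝ) (a : ℝ) :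
    ∫ v, f v * (if a ≤ v then (1:ℝ) else 0) ∂μ = ∫ v in Ici a, f v ∂μ := by
  rw [← integral_indicator measurableSet_Ici]
  congr 1
  funext v
  by_cases h : a ≤ v <;> simp [indicator, h]

/-- For a posted-price TFM with price `p` and per-user burn `B`,
the threshold allocation `𝟙[v ≥ p]` maximizes the expected virtual utility
`∫ (φ v − B) · x v dμ` over all measurable allocation rules `x : ℝ → [0,1]`
if and only if `B = φ p`. -/
theorem posted_price_offchain_influence_proof_iff
    (μ : Measure ℝ) [IsProbabilityMeasure μ]
    (S : Set ℝ)
    (hS_supp : ∀ x : ℝ, x ∈ S ↔ ∀ U ∈ nhds x, 0 < μ U)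
    (hS_interval : S.OrdConnected)
    (hS_int : (interior S).Nonempty)
    (φ : ℝ → ℝ)
    (hφ_int : Integrable φ μ)
    (hφ_cont : ContinuousOn φ S)
    (hφ_mono : StrictMonoOn φ S)
    (p : ℝ) (hp : p ∈ interior S)
    (B : ℝ) :
    B = φ p ↔
      ∀ x : ℝ → ℝ, Measurable x → (∀ v, x v ∈ Icc (0:ℝ) 1) →
        ∫ v, (φ v - B) * (if p ≤ v then (1:ℝ) else 0) ∂μ ≥
          ∫ v, (φ v - B) * x v ∂μ := by
  have hpS : p ∈ S := interior_subset hp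
  have hae : ∀ᵐ v ∂μ, v ∈ S := ae_mem_of_supp μ S hS_supp
  have hfB : Integrable (fun v => φ v - B) μ := hφ_int.sub (integrable_const B)
  constructor
  · -- B = φ p ⇒ threshold optimal
    rintro rfl x hxm hx01
    have hint2 : Integrable (fun v => (φ v - φ p) * x v) μ := by
      have : Integrable (fun v => x v * (φ v - φ p)) μ := by
        apply hfB.bdd_mul (c := 1) hxm.aestronglyMeasurable
        refine Filter.Eventually.of_forall (fun v => ?_)
        have h := hx01 v
        rw [Real.norm_eq_abs, abs_le]
        constructor <;> linarith [h.1, h.2]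
      simpa [mul_comm] using this
    have hint1 : Integrable (fun v => (φ v - φ p) * (if p ≤ v then (1:ℝ) else 0)) μ := by
      have : Integrable (fun v => (Ici p).indicator (fun v => φ v - φ p) v) μ :=
        hfB.indicator measurableSet_Ici
      apply this.congr
      filter_upwards with v
      by_cases h : p ≤ v <;> simp [indicator, h]
    rw [ge_iff_le, ← sub_nonneg, ← integral_sub hint1 hint2]
    apply integral_nonneg_of_ae
    filter_upwards [hae] with v hvS
    simp only [Pi.zero_apply]
    have hx := hx01 v
    by_cases h : p ≤ v
    · have : φ p ≤ φ v := by
        rcases eq_or_lt_of_le h with h' | h'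
        · rw [h']
        · exact le_of_lt (hφ_mono hpS hvS h')
      simp only [h, if_true, mul_one]
      nlinarith [hx.1, hx.2]
    · have : φ v ≤ φ p := le_of_lt (hφ_mono hvS hpS (lt_of_not_ge h))
      simp only [h, if_false, mul_zero]
      nlinarith [hx.1, hx.2]
  · -- optimality ⇒ B = φ p
    intro hopt
    by_contra hne
    -- get a ball around p inside S
    obtain ⟨ε₀, hε₀, hball⟩ := Metric.mem_nhds_iff.1 (mem_interior_iff_mem_nhds.1 hp)
    have hcont : ContinuousAt φ p :=
      (hφ_cont p hpS).continuousAt (mem_interior_iff_mem_nhds.1 hp)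
    -- set up set-integral facts
    have hIci : ∀ a b : ℝ, a ≤ b →
        ∫ v in Ici a, (φ v - B) ∂μ - ∫ v in Ici b, (φ v - B) ∂μ
          = ∫ v in Ico a b, (φ v - B) ∂μ := by
      intro a b hab
      have hd : Disjoint (Ico a b) (Ici b) := by
        apply disjoint_left.2
        intro v hv hv'
        exact absurd hv.2 (not_lt.2 hv')
      have hu : Ico a b ∪ Ici b = Ici a := Ico_union_Ici_eq_Ici hab
      rw [← hu, setIntegral_union hd measurableSet_Ici hfB.integrableOn hfB.integrableOn]
      ring
    -- the positive-measure fact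
    have hpos : ∀ a b : ℝ, a < b → Ioo a b ⊆ S → 0 < (μ (Ico a b)).toReal := by
      intro a b hab hsub
      have hmem : (a + b) / 2 ∈ Ioo a b := ⟨by linarith, by linarith⟩
      have h1 : 0 < μ (Ioo a b) :=
        (hS_supp _).1 (hsub hmem) _ (Ioo_mem_nhds hmem.1 hmem.2)
      have h2 : 0 < μ (Ico a b) := lt_of_lt_of_le h1 (measure_mono Ioo_subset_Ico_self)
      exact ENNReal.toReal_pos h2.ne' (measure_ne_top μ _)
    rcases lt_or_gt_of_ne hne with hBlt | hBgt
    · -- B < φ p : use threshold p' := p - ε/2 < p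
      have hev : ∀ᶠ v in nhds p, B < φ v ∧ v ∈ S := by
        filter_upwards [continuousAt_const.eventually_lt hcont hBlt,
          mem_interior_iff_mem_nhds.1 hp] with v h1 h2 using ⟨h1, h2⟩
      obtain ⟨ε, hε, hb⟩ := Metric.eventually_nhds_iff_ball.1 hev
      set p' := p - ε / 2 with hp'
      have hp'p : p' < p := by simp [hp']; linarith
      have hp'ball : ∀ v ∈ Icc p' p, B < φ v ∧ v ∈ S := by
        intro v hv
        obtain ⟨hv1, hv2⟩ := hv
        rw [hp'] at hv1
        apply hb
        rw [Real.ball_eq_Ioo]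
        exact ⟨by linarith, by linarith⟩
      have hx01 : ∀ v, (if p' ≤ v then (1:ℝ) else 0) ∈ Icc (0:ℝ) 1 := by
        intro v; by_cases h : p' ≤ v <;> simp [h]
      have hxm : Measurable (fun v => if p' ≤ v then (1:ℝ) else 0) :=
        Measurable.ite measurableSet_Ici measurable_const measurable_const
      have := hopt _ hxm hx01
      rw [integral_mul_ite, integral_mul_ite, ge_iff_le, ← sub_nonneg] at this
      have hle : ∫ v in Ico p' p, (φ v - B) ∂μ ≤ 0 := by
        rw [← hIci p' p hp'p.le]; linarith
      -- but the integral over Ico p' p is strictly positive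
      have hlb : ∀ v ∈ Ico p' p, φ p' - B ≤ φ v - B := by
        intro v hv
        have h1 := hp'ball p' ⟨le_refl _, hp'p.le⟩
        have h2 := hp'ball v ⟨hv.1, hv.2.le⟩
        rcases eq_or_lt_of_le hv.1 with h' | h'
        · rw [h']
        · linarith [hφ_mono h1.2 h2.2 h']
      have hge := setIntegral_ge_of_const_le_real measurableSet_Ico (measure_ne_top μ _)
        hlb hfB.integrableOn
      rw [measureReal_def] at hge
      have hμpos : 0 < (μ (Ico p' p)).toReal := by
        apply hpos _ _ hp'p
        intro v hv
        exact (hp'ball v ⟨hv.1.le, hv.2.le⟩).2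
      have hc : 0 < φ p' - B := sub_pos.2 (hp'ball p' ⟨le_refl _, hp'p.le⟩).1
      nlinarith
    · -- B > φ p : use threshold p'' := p + ε/2 > p
      have hev : ∀ᶠ v in nhds p, φ v < B ∧ v ∈ S := by
        filter_upwards [hcont.eventually_lt continuousAt_const hBgt,
          mem_interior_iff_mem_nhds.1 hp] with v h1 h2 using ⟨h1, h2⟩
      obtain ⟨ε, hε, hb⟩ := Metric.eventually_nhds_iff_ball.1 hev
      set p'' := p + ε / 2 with hp''
      have hpp'' : p < p'' := by simp [hp'']; linarith
      have hp''ball : ∀ v ∈ Icc p p'', φ v < B ∧ v ∈ S := by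
        intro v hv
        obtain ⟨hv1, hv2⟩ := hv
        rw [hp''] at hv2
        apply hb
        rw [Real.ball_eq_Ioo]
        exact ⟨by linarith, by linarith⟩
      have hx01 : ∀ v, (if p'' ≤ v then (1:ℝ) else 0) ∈ Icc (0:ℝ) 1 := by
        intro v; by_cases h : p'' ≤ v <;> simp [h]
      have hxm : Measurable (fun v => if p'' ≤ v then (1:ℝ) else 0) :=
        Measurable.ite measurableSet_Ici measurable_const measurable_const
      have := hopt _ hxm hx01
      rw [integral_mul_ite, integral_mul_ite, ge_iff_le, ← sub_nonneg] at this
      have hle : 0 ≤ ∫ v in Ico p p'', (φ v - B) ∂μ := by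
        rw [← hIci p p'' hpp''.le]; linarith
      -- but the integral over Ico p p'' is strictly negative
      have hub : ∀ v ∈ Ico p p'', B - φ v ≥ B - φ p'' := by
        intro v hv
        have h1 := hp''ball p'' ⟨hpp''.le, le_refl _⟩
        have h2 := hp''ball v ⟨hv.1, hv.2.le⟩
        linarith [hφ_mono h2.2 h1.2 hv.2]
      have hge := setIntegral_ge_of_const_le_real (f := fun v => B - φ v) measurableSet_Ico
        (measure_ne_top μ _) hub ((integrable_const B).sub hφ_int).integrableOn
      rw [measureReal_def] at hge
      have hμpos : 0 < (μ (Ico p p'')).toReal := by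
        apply hpos _ _ hpp''
        intro v hv
        exact (hp''ball v ⟨hv.1.le, hv.2.le⟩).2
      have hc : 0 < B - φ p'' := sub_pos.2 (hp''ball p'' ⟨hpp''.le, le_refl _⟩).1
      have hneg : ∫ v in Ico p p'', (B - φ v) ∂μ
          = - ∫ v in Ico p p'', (φ v - B) ∂μ := by
        rw [← integral_neg]
        congr 1; funext v; ring
      rw [hneg] at hge
      nlinarith
end

section
/- Let μ be a Borel probability measure on ℝ with support S ⊆ [0,∞), let φ : ℝ → ℝ be continuous, and let n ≥ 1. Let X : ℝⁿ → [0,1]ⁿ and B̄ : ℝⁿ → ℝ be functions for which there is a constant c with c ≤ B̄(v) ≤ c + ∑ᵢ vᵢ for all v ∈ Sⁿ. Suppose that for μⁿ-almost every v ∈ Sⁿ, the inequality ∑ᵢ φ(vᵢ)·Xᵢ(v) − B̄(v) ≥ ∑ᵢ φ(vᵢ)·Xᵢ(w) − B̄(w) holds for every w ∈ Sⁿ. Then there exist functions X̃ : Sⁿ → [0,1]ⁿ and B̃ : Sⁿ → ℝ that agree with (X, B̄) outside a μⁿ-null subset of Sⁿ and satisfy ∑ᵢ φ(vᵢ)·X̃ᵢ(v)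 − B̃(v) ≥ ∑ᵢ φ(vᵢ)·X̃ᵢ(w) − B̃(w) for ALL v, w ∈ Sⁿ. -/
open MeasureTheory Set Filter Topology

private lemma mul_mem01_le_abs (a t : ℝ) (h0 : 0 ≤ t) (h1 : t ≤ 1) : a * t ≤ |a| :=
  calc a * t ≤ |a| * t := mul_le_mul_of_nonneg_right (le_abs_self a) h0
  _ ≤ |a| * 1 := mul_le_mul_of_nonneg_left h1 (abs_nonneg a)
  _ = |a| := mul_one _

/-- The set of "good" profiles: in `Sⁿ` and pointwise maximizing. -/
private def mmGood (S : Set ℝ) (φ : ℝ → ℝ) {n : ℕ}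
    (X : (Fin n → ℝ) → (Fin n → ℝ)) (Bbar : (Fin n → ℝ) → ℝ) : Set (Fin n → ℝ) :=
  {v | (∀ i, v i ∈ S) ∧ ∀ w : Fin n → ℝ, (∀ i, w i ∈ S) →
    ∑ i, φ (v i) * X w i - Bbar w ≤ ∑ i, φ (v i) * X v i - Bbar v}

/-- Sup of the virtual utility of type `u` over good profiles. -/
private noncomputable def mmM (S : Set ℝ) (φ : ℝ → ℝ) {n : ℕ}
    (X : (Fin n → ℝ) → (Fin n → ℝ)) (Bbar : (Fin n → ℝ) → ℝ) (u : Fin n → ℝ) : ℝ :=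
  sSup ((fun w => ∑ i, φ (u i) * X w i - Bbar w) '' mmGood S φ X Bbar)

set_option maxHeartbeats 1000000 in
/-- Theorem 4.6, monopsonist smoothening. If a mechanism `(X, B̄)`
pointwise maximizes the miner's virtual utility for `μⁿ`-almost-every value profile in
`Sⁿ`, and the burn is bounded as `c ≤ B̄(v) ≤ c + ∑ᵢ vᵢ` on `Sⁿ`, then `(X, B̄)` can be
modified on a `μⁿ`-null subset of `Sⁿ` so that the inequality holds for ALL profiles
`v, w ∈ Sⁿ`. -/
theorem monopsonist_smoothening
    (μ : Measure ℝ) [IsProbabilityMeasure μ]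
    (S : Set ℝ)
    (hS_supp : ∀ x : ℝ, x ∈ S ↔ ∀ U ∈ nhds x, 0 < μ U)
    (hS_nonneg : S ⊆ Ici (0:ℝ))
    (φ : ℝ → ℝ) (hφ_cont : Continuous φ)
    (n : ℕ) (hn : 1 ≤ n)
    (X : (Fin n → ℝ) → (Fin n → ℝ))
    (Bbar : (Fin n → ℝ) → ℝ)
    (hX_mem : ∀ v i, X v i ∈ Icc (0:ℝ) 1)
    (c : ℝ)
    (hB_bdd : ∀ v : Fin n → ℝ, (∀ i, v i ∈ S) →
      c ≤ Bbar v ∧ Bbar v ≤ c + ∑ i, v i)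
    (hIC : ∀ᵐ v ∂(Measure.pi fun _ : Fin n => μ),
      (∀ i, v i ∈ S) →
      ∀ w : Fin n → ℝ, (∀ i, w i ∈ S) →
        ∑ i, φ (v i) * X w i - Bbar w ≤ ∑ i, φ (v i) * X v i - Bbar v) :
    ∃ (Xt : (Fin n → ℝ) → (Fin n → ℝ)) (Bt : (Fin n → ℝ) → ℝ),
      (∀ v : Fin n → ℝ, (∀ i, v i ∈ S) → ∀ i, Xt v i ∈ Icc (0:ℝ) 1) ∧
      (Measure.pi fun _ : Fin n => μ)
        {v | (∀ i, v i ∈ S) ∧ ¬(Xt v = X v ∧ Bt v = Bbar v)} = 0 ∧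
      (∀ v w : Fin n → ℝ, (∀ i, v i ∈ S) → (∀ i, w i ∈ S) →
        ∑ i, φ (v i) * Xt w i - Bt w ≤ ∑ i, φ (v i) * Xt v i - Bt v) := by
  classical
  set ν : Measure (Fin n → ℝ) := Measure.pi fun _ : Fin n => μ with hν
  set G : Set (Fin n → ℝ) := mmGood S φ X Bbar with hGdef
  set M : (Fin n → ℝ) → ℝ := mmM S φ X Bbar with hMdef
  -- the bad set is null
  have hbad : ν {v : Fin n → ℝ | (∀ i, v i ∈ S) ∧ v ∉ G} = 0 := by
    rw [ae_iff] at hIC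
    refine measure_mono_null ?_ hIC
    intro v hv
    simp only [mem_setOf_eq] at hv ⊢
    intro h
    exact hv.2 ⟨hv.1, h hv.1⟩
  -- S is closed, hence measurable, and has full measure
  have hScompl_nhds : ∀ x ∉ S, Sᶜ ∈ nhds x ∧ ∃ U ∈ nhds x, μ U = 0 := by
    intro x hx
    rw [hS_supp] at hx
    push_neg at hx
    obtain ⟨U, hU, hU0⟩ := hx
    have hU0' : μ U = 0 := le_antisymm hU0 zero_le
    have hint : interior U ⊆ Sᶜ := by
      intro y hy
      intro hyS
      have := (hS_supp y).1 hyS (interior U) (isOpen_interior.mem_nhds hy)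
      exact absurd (le_antisymm (le_trans (measure_mono interior_subset) hU0) zero_le)
        (ne_of_gt this)
    exact ⟨Filter.mem_of_superset (interior_mem_nhds.2 hU) hint, ⟨U, hU, hU0'⟩⟩
  have hSclosed : IsClosed S := by
    rw [← isOpen_compl_iff, isOpen_iff_mem_nhds]
    intro x hx
    exact (hScompl_nhds x hx).1
  have hSmeas : MeasurableSet S := hSclosed.measurableSet
  have hScompl0 : μ Sᶜ = 0 := by
    refine measure_null_of_locally_null _ (fun x hx => ?_)
    obtain ⟨U, hU, hU0⟩ := (hScompl_nhds x hx).2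
    exact ⟨U, mem_nhdsWithin_of_mem_nhds hU, hU0⟩
  have hS1 : μ S = 1 := (prob_compl_eq_zero_iff hSmeas).1 hScompl0
  have hSn : ν {v : Fin n → ℝ | ∀ i, v i ∈ S} = 1 := by
    have : {v : Fin n → ℝ | ∀ i, v i ∈ S} = Set.pi univ (fun _ => S) := by
      ext v; simp [Set.mem_pi]
    rw [this, hν, Measure.pi_pi]
    simp [hS1]
  -- G is nonempty
  have hGne : G.Nonempty := by
    by_contra h
    rw [Set.not_nonempty_iff_eq_empty] at h
    have hsub : {v : Fin n → ℝ | ∀ i, v i ∈ S} ⊆ {v : Fin n → ℝ | (∀ i, v i ∈ S) ∧ v ∉ G} := by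
      intro v hv
      exact ⟨hv, by simp [h]⟩
    have := measure_mono_null hsub hbad
    rw [hSn] at this
    exact one_ne_zero this
  -- basic facts about M
  have hfub : ∀ u w : Fin n → ℝ, (∀ i, w i ∈ S) →
      ∑ i, φ (u i) * X w i - Bbar w ≤ (∑ i, |φ (u i)|) - c := by
    intro u w hw
    have hB := (hB_bdd w hw).1
    have hsum : ∑ i, φ (u i) * X w i ≤ ∑ i, |φ (u i)| :=
      Finset.sum_le_sum fun i _ => mul_mem01_le_abs _ _ (hX_mem w i).1 (hX_mem w i).2
    linarith
  have hbddA : ∀ u : Fin n → ℝ,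
      BddAbove ((fun w => ∑ i, φ (u i) * X w i - Bbar w) '' G) := by
    intro u
    refine ⟨(∑ i, |φ (u i)|) - c, ?_⟩
    rintro _ ⟨w, hw, rfl⟩
    exact hfub u w hw.1
  have hneA : ∀ u : Fin n → ℝ,
      ((fun w => ∑ i, φ (u i) * X w i - Bbar w) '' G).Nonempty :=
    fun u => hGne.image _
  -- key lemma A: f u w ≤ M u for w good
  have hA : ∀ u w : Fin n → ℝ, w ∈ G →
      ∑ i, φ (u i) * X w i - Bbar w ≤ M u := by
    intro u w hw
    exact le_csSup (hbddA u) ⟨w, hw, rfl⟩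
  -- key lemma B: M v = f v v for v good
  have hBlem : ∀ v : Fin n → ℝ, v ∈ G →
      M v = ∑ i, φ (v i) * X v i - Bbar v := by
    intro v hv
    refine le_antisymm (csSup_le (hneA v) ?_) (le_csSup (hbddA v) ⟨v, hv, rfl⟩)
    rintro _ ⟨w, hw, rfl⟩
    exact hv.2 w hw.1
  -- the limit construction for arbitrary points of Sⁿ
  have hC : ∀ v : Fin n → ℝ, (∀ i, v i ∈ S) →
      ∃ p : (Fin n → ℝ) × ℝ, (∀ i, p.1 i ∈ Icc (0:ℝ) 1) ∧
        (∑ i, φ (v i) * p.1 i - p.2 = M v) ∧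
        (∀ u : Fin n → ℝ, (∀ i, u i ∈ S) → ∑ i, φ (u i) * p.1 i - p.2 ≤ M u) := by
    intro v hv
    obtain ⟨a, ha_mono, ha_tend, ha_mem⟩ := exists_seq_tendsto_sSup (hneA v) (hbddA v)
    have ha_tend' : Tendsto a atTop (𝓝 (M v)) := ha_tend
    choose w hwG hwval using ha_mem
    -- the sequence (X (w k), Bbar (w k)) lies in a compact set
    set K : Set ((Fin n → ℝ) × ℝ) :=
      (Set.pi univ fun _ : Fin n => Icc (0:ℝ) 1) ×ˢ Icc c ((∑ i, |φ (v i)|) - a 0) with hK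
    have hKcomp : IsCompact K := by
      exact (isCompact_univ_pi fun _ => isCompact_Icc).prod isCompact_Icc
    have hmemK : ∀ k, (X (w k), Bbar (w k)) ∈ K := by
      intro k
      constructor
      · intro i _
        exact hX_mem (w k) i
      · constructor
        · exact (hB_bdd (w k) (hwG k).1).1
        · have hsum : ∑ i, φ (v i) * X (w k) i ≤ ∑ i, |φ (v i)| :=
            Finset.sum_le_sum fun i _ => mul_mem01_le_abs _ _ (hX_mem (w k) i).1
              (hX_mem (w k) i).2
          have h0k : a 0 ≤ a k := ha_mono (Nat.zero_le k)
          have hval : ∑ i, φ (v i) * X (w k) i - Bbar (w k) = a k := hwval k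
          linarith
    obtain ⟨p, hpK, ψ, hψ, hψtend⟩ := hKcomp.tendsto_subseq hmemK
    refine ⟨p, ?_, ?_, ?_⟩
    · intro i
      exact hpK.1 i (mem_univ i)
    · -- value at the limit equals M v
      have hcont : Continuous fun q : (Fin n → ℝ) × ℝ => ∑ i, φ (v i) * q.1 i - q.2 := by
        refine Continuous.sub ?_ continuous_snd
        exact continuous_finset_sum _ fun i _ =>
          continuous_const.mul ((continuous_apply i).comp continuous_fst)
      have h1 : Tendsto (fun k => ∑ i, φ (v i) * X (w (ψ k)) i - Bbar (w (ψ k))) atTop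
          (𝓝 (∑ i, φ (v i) * p.1 i - p.2)) := ((hcont.tendsto p).comp hψtend).congr (fun k => rfl)
      have h2 : Tendsto (fun k => ∑ i, φ (v i) * X (w (ψ k)) i - Bbar (w (ψ k))) atTop
          (𝓝 (M v)) := by
        have : (fun k => ∑ i, φ (v i) * X (w (ψ k)) i - Bbar (w (ψ k))) = fun k => a (ψ k) := by
          funext k; exact hwval (ψ k)
        rw [this]
        exact ha_tend'.comp hψ.tendsto_atTop
      exact tendsto_nhds_unique h1 h2
    · intro u hu
      have hcont : Continuous fun q : (Fin n → ℝ) × ℝ => ∑ i, φ (u i) * q.1 i - q.2 := by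
        refine Continuous.sub ?_ continuous_snd
        exact continuous_finset_sum _ fun i _ =>
          continuous_const.mul ((continuous_apply i).comp continuous_fst)
      have h1 : Tendsto (fun k => ∑ i, φ (u i) * X (w (ψ k)) i - Bbar (w (ψ k))) atTop
          (𝓝 (∑ i, φ (u i) * p.1 i - p.2)) := ((hcont.tendsto p).comp hψtend).congr (fun k => rfl)
      refine le_of_tendsto h1 (Filter.Eventually.of_forall fun k => ?_)
      exact hA u (w (ψ k)) (hwG (ψ k))
  -- define the smoothed mechanism
  let F : (Fin n → ℝ) → ((Fin n → ℝ) × ℝ) := fun v =>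
    if h : (∀ i, v i ∈ S) ∧ v ∉ G then Classical.choose (hC v h.1) else (X v, Bbar v)
  have hF_good : ∀ v : Fin n → ℝ, v ∈ G → F v = (X v, Bbar v) := by
    intro v hv
    simp only [F]
    rw [dif_neg]
    rintro ⟨-, h2⟩
    exact h2 hv
  have hF_bad : ∀ v : Fin n → ℝ, (∀ i, v i ∈ S) → v ∉ G →
      (∀ i, (F v).1 i ∈ Icc (0:ℝ) 1) ∧
      (∑ i, φ (v i) * (F v).1 i - (F v).2 = M v) ∧
      (∀ u : Fin n → ℝ, (∀ i, u i ∈ S) →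
        ∑ i, φ (u i) * (F v).1 i - (F v).2 ≤ M u) := by
    intro v hv hvG
    have hcond : (∀ i, v i ∈ S) ∧ v ∉ G := ⟨hv, hvG⟩
    simp only [F, dif_pos hcond]
    exact Classical.choose_spec (hC v hcond.1)
  -- value of the smoothed mechanism
  have hVal : ∀ v : Fin n → ℝ, (∀ i, v i ∈ S) →
      ∑ i, φ (v i) * (F v).1 i - (F v).2 = M v := by
    intro v hv
    by_cases hvG : v ∈ G
    · rw [hF_good v hvG]
      exact (hBlem v hvG).symm
    · exact (hF_bad v hv hvG).2.1
  have hUB : ∀ u v : Fin n → ℝ, (∀ i, u i ∈ S) → (∀ i, v i ∈ S) →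
      ∑ i, φ (u i) * (F v).1 i - (F v).2 ≤ M u := by
    intro u v hu hv
    by_cases hvG : v ∈ G
    · rw [hF_good v hvG]
      exact hA u v hvG
    · exact (hF_bad v hv hvG).2.2 u hu
  refine ⟨fun v => (F v).1, fun v => (F v).2, ?_, ?_, ?_⟩
  · intro v hv i
    show (F v).1 i ∈ Icc (0:ℝ) 1
    by_cases hvG : v ∈ G
    · rw [hF_good v hvG]
      exact hX_mem v i
    · exact (hF_bad v hv hvG).1 i
  · refine measure_mono_null ?_ hbad
    intro v hv
    simp only [mem_setOf_eq] at hv ⊢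
    refine ⟨hv.1, fun hvG => hv.2 ?_⟩
    show (F v).1 = X v ∧ (F v).2 = Bbar v
    rw [hF_good v hvG]
    exact ⟨rfl, rfl⟩
  · intro v w hv hw
    show ∑ i, φ (v i) * (F w).1 i - (F w).2 ≤ ∑ i, φ (v i) * (F v).1 i - (F v).2
    calc ∑ i, φ (v i) * (F w).1 i - (F w).2 ≤ M v := hUB v w hv hw
    _ = ∑ i, φ (v i) * (F v).1 i - (F v).2 := (hVal v hv).symm
end

section
/- Let U : ℝⁿ → ℝ be convex and non-decreasing with respect to the coordinatewise order. Then there exists a map X : ℝⁿ → ℝⁿ with X(v) ≥ 0 componentwise for every v such that, setting P(v) := ⟨v, X(v)⟩ − U(v), the mechanism (X, P) is incentive compatible: for all v, w ∈ ℝⁿ, ⟨v, X(v)⟩ − P(v) ≥ ⟨v, X(w)⟩ − P(w); moreover the buyer's utility ⟨v, X(v)⟩ − P(v) equals U(v) for every v. -/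
open Finset

/-- Existence of a subgradient at every point for a convex function on `ℝⁿ`. -/
lemma exists_subgradient (n : ℕ) (U : (Fin n → ℝ) → ℝ)
    (hU : ConvexOn ℝ Set.univ U) (w : Fin n → ℝ) :
    ∃ g : Fin n → ℝ, ∀ v, U w + ∑ i, g i * (v i - w i) ≤ U v := by
  have hcont : Continuous U := hU.locallyLipschitz.continuous
  set S : Set ((Fin n → ℝ) × ℝ) := {p | U p.1 < p.2} with hS
  have hSconv : Convex ℝ S := by
    have := hU.convex_strict_epigraph
    convert this using 1
    ext p; simp [hS]
  have hSopen : IsOpen S := isOpen_lt (hcont.comp continuous_fst) continuous_snd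
  have hwS : (w, U w) ∉ S := by simp [hS]
  obtain ⟨f, hf⟩ := geometric_hahn_banach_open_point hSconv hSopen hwS
  set c : ℝ := f (0, 1) with hc
  have hdecomp : ∀ (v : Fin n → ℝ) (t : ℝ), f (v, t) = f (v, 0) + t * c := by
    intro v t
    have h : (v, t) = (v, (0:ℝ)) + t • ((0 : Fin n → ℝ), (1:ℝ)) := by
      simp [Prod.ext_iff]
    rw [h, map_add, map_smul, smul_eq_mul, hc]
  have hcneg : c < 0 := by
    have hadd : (w, U w + 1) = (w, U w) + ((0 : Fin n → ℝ), (1:ℝ)) := by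
      simp [Prod.ext_iff]
    have h1 : f (w, U w + 1) < f (w, U w) := hf _ (by simp [hS])
    rw [hadd, map_add] at h1
    linarith
  -- f on closure of S is ≤ f (w, U w); in particular at (v, U v)
  have key : ∀ v : Fin n → ℝ, f (v, U v) ≤ f (w, U w) := by
    intro v
    have hmem : (v, U v) ∈ closure S := by
      have ht : Filter.Tendsto (fun t : ℝ => ((v : Fin n → ℝ), U v + t))
          (nhdsWithin 0 (Set.Ioi 0)) (nhds (v, U v)) := by
        have : Filter.Tendsto (fun t : ℝ => ((v : Fin n → ℝ), U v + t))
            (nhds 0) (nhds (v, U v)) := by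
          have h2 : Filter.Tendsto (fun t : ℝ => U v + t) (nhds 0) (nhds (U v + 0)) :=
            (continuous_const.add continuous_id).tendsto 0
          rw [add_zero] at h2
          exact tendsto_const_nhds.prodMk_nhds h2
        exact this.mono_left nhdsWithin_le_nhds
      refine mem_closure_of_tendsto ht ?_
      filter_upwards [self_mem_nhdsWithin] with t ht'
      have : (0:ℝ) < t := ht'
      simp only [hS, Set.mem_setOf_eq]
      linarith
    have hsub' : closure S ⊆ {p | f p ≤ f (w, U w)} :=
      closure_minimal (fun a ha => (hf a ha).le)
        (isClosed_le f.continuous continuous_const)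
    exact hsub' hmem
  refine ⟨fun i => -(f (Pi.single i 1, 0)) / c, fun v => ?_⟩
  have hlin : ∀ u : Fin n → ℝ, f (u, 0) = ∑ i, u i * f (Pi.single i 1, 0) := by
    intro u
    have hrepr : (u, (0:ℝ)) = ∑ i, u i • ((Pi.single i 1 : Fin n → ℝ), (0:ℝ)) := by
      rw [Prod.ext_iff]
      constructor
      · simp only [Prod.fst_sum, Prod.smul_mk]
        ext j
        simp [Pi.single_apply, Finset.sum_apply, mul_comm]
      · simp [Prod.snd_sum]
    rw [hrepr, map_sum]
    refine Finset.sum_congr rfl fun i _ => ?_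
    rw [map_smul, smul_eq_mul]
  have hkey := key v
  rw [hdecomp v (U v), hdecomp w (U w), hlin v, hlin w] at hkey
  show U w + ∑ i, -(f (Pi.single i 1, 0)) / c * (v i - w i) ≤ U v
  have h3 : ∑ i, -(f (Pi.single i 1, 0)) / c * (v i - w i)
      = (∑ i, (w i * f (Pi.single i 1, 0) - v i * f (Pi.single i 1, 0))) / c := by
    rw [Finset.sum_div]
    refine Finset.sum_congr rfl fun i _ => ?_
    field_simp
    ring
  rw [h3, Finset.sum_sub_distrib]
  have hdiv : (∑ i, w i * f (Pi.single i 1, 0) - ∑ i, v i * f (Pi.single i 1, 0)) / c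
      ≤ U v - U w := by
    rw [div_le_iff_of_neg hcneg]
    nlinarith [hkey]
  linarith

/-- existence direction of Rochet's characterization, Theorem 4.7.
Every convex, coordinatewise non-decreasing `U : ℝⁿ → ℝ` is the utility function of
some DSIC mechanism for a single additive buyer: there is an allocation rule `X ≥ 0`
with payment `P(v) = ⟨v, X(v)⟩ − U(v)` such that `(X, P)` is incentive compatible and
the buyer's utility equals `U` everywhere. -/
theorem rochet_existence
    (n : ℕ) (U : (Fin n → ℝ) → ℝ)
    (hU_convex : ConvexOn ℝ Set.univ U) (hU_mono : Monotone U) :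
    ∃ (X : (Fin n → ℝ) → (Fin n → ℝ)) (P : (Fin n → ℝ) → ℝ),
      (∀ v i, 0 ≤ X v i) ∧
      (∀ v, P v = ∑ i, v i * X v i - U v) ∧
      (∀ v w : Fin n → ℝ,
        ∑ i, v i * X w i - P w ≤ ∑ i, v i * X v i - P v) ∧
      (∀ v, ∑ i, v i * X v i - P v = U v) := by
  choose X hX using exists_subgradient n U hU_convex
  refine ⟨X, fun v => ∑ i, v i * X v i - U v, ?_, fun v => rfl, ?_, fun v => by ring⟩
  · -- nonnegativity from monotonicity
    intro w i
    set v : Fin n → ℝ := Function.update w i (w i - 1) with hv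
    have hle : v ≤ w := by
      intro j
      rcases eq_or_ne j i with rfl | hj
      · simp [hv]
      · simp [hv, Function.update_of_ne hj]
    have hUle : U v ≤ U w := hU_mono hle
    have hsub := hX w v
    have hsum : ∑ j, X w j * (v j - w j) = -(X w i) := by
      rw [Finset.sum_eq_single i]
      · simp [hv]
      · intro j _ hj
        simp [hv, Function.update_of_ne hj]
      · simp
    rw [hsum] at hsub
    linarith
  · -- incentive compatibility
    intro v w
    dsimp only
    have hsub := hX w v
    have heq : ∑ i, v i * X w i - ∑ i, w i * X w i = ∑ i, X w i * (v i - w i) := by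
      rw [← Finset.sum_sub_distrib]
      refine Finset.sum_congr rfl fun i _ => ?_
      ring
    linarith
end

section
/- Let j ≤ t ≤ n be positive integers, let 0 ≤ v_{n+1} ≤ v_n ≤ ⋯ ≤ v_j be reals, let w ∈ [v_{t+1}, v_t], and let x_j, …, x_{n+1} be reals. Define A : ℝ → ℝ by A(z) = 0 on [0, v_{n+1}) and A(z) = x_i on [v_{i+1}, v_i) for j ≤ i ≤ n; define A' : ℝ → ℝ by A'(z) = 0 on [0, v_{n+1}), A'(z) = x_{i+1} on [v_{i+1}, v_i) for t+1 ≤ i ≤ n, A'(z) = x_{t+1} on [v_{t+1}, w), A'(z) = x_t on [w, v_t), and A'(z) = x_i on [v_{i+1}, v_i) for j ≤ i ≤ t−1. Then ∫₀^{v_j} A(z) dz − ∫₀^{v_j} A'(z) dz = (w − v_{t+1})·(x_t − x_{t+1}) + ∑_{i=t+1}^{n} (v_i − v_{i+1})·(x_i − x_{i+1}); equivalently, the Myerson payment at v_j increases by exactly this amount when A is replaced by A'. -/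
open MeasureTheory
lemma const_on_Ico_integral (f : ℝ → ℝ) (a b c : ℝ) (hab : a ≤ b)
    (h : ∀ z ∈ Set.Ico a b, f z = c) :
    IntervalIntegrable f volume a b ∧ ∫ z in a..b, f z = c * (b - a) := by
  have hb : ∀ᵐ z : ℝ ∂volume, z ≠ b := by
    rw [MeasureTheory.ae_iff]
    simpa using measure_singleton b
  have hae : f =ᵐ[volume.restrict (Set.Ioc a b)] fun _ => c := by
    refine (MeasureTheory.ae_restrict_iff' measurableSet_Ioc).2 ?_
    filter_upwards [hb] with z hz hmem
    exact h z ⟨le_of_lt hmem.1, lt_of_le_of_ne hmem.2 hz⟩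
  have hint : IntervalIntegrable f volume a b := by
    rw [intervalIntegrable_iff_integrableOn_Ioc_of_le hab]
    exact ((integrableOn_const measure_Ioc_lt_top.ne).congr hae.symm)
  refine ⟨hint, ?_⟩
  calc ∫ z in a..b, f z = ∫ z in Set.Ioc a b, f z := intervalIntegral.integral_of_le hab
    _ = ∫ _ in Set.Ioc a b, c := integral_congr_ae hae
    _ = c * (b - a) := by
        rw [setIntegral_const, Real.volume_real_Ioc_of_le hab, smul_eq_mul]
        ring

lemma step_integral (v c : ℕ → ℝ) (f : ℝ → ℝ) (m : ℕ) (h0 : 0 ≤ v m)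
    (hf0 : ∀ z ∈ Set.Ico (0:ℝ) (v m), f z = 0) :
    ∀ d k, k + d = m →
    (∀ i, k ≤ i → i < m → v (i+1) ≤ v i) →
    (∀ i, k ≤ i → i < m → ∀ z ∈ Set.Ico (v (i+1)) (v i), f z = c i) →
    IntervalIntegrable f volume 0 (v k) ∧
      ∫ z in (0:ℝ)..(v k), f z = ∑ i ∈ Finset.Ico k m, c i * (v i - v (i+1)) := by
  intro d
  induction d with
  | zero =>
    intro k hk _ _
    have hkm : k = m := by omega
    obtain ⟨h1, h2⟩ := const_on_Ico_integral f 0 (v k) 0 (hkm ▸ h0) (hkm ▸ hf0)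
    refine ⟨h1, ?_⟩
    rw [h2]
    simp [hkm]
  | succ d ih =>
    intro k hk hmono hval
    have hk1 : k + 1 + d = m := by omega
    have hkm : k < m := by omega
    obtain ⟨ih1, ih2⟩ := ih (k+1) hk1
      (fun i hi hi' => hmono i (by omega) hi')
      (fun i hi hi' => hval i (by omega) hi')
    have hle : v (k+1) ≤ v k := hmono k le_rfl hkm
    obtain ⟨h1, h2⟩ := const_on_Ico_integral f (v (k+1)) (v k) (c k) hle
      (hval k le_rfl hkm)
    refine ⟨ih1.trans h1, ?_⟩
    rw [← intervalIntegral.integral_add_adjacent_intervals ih1 h1, ih2, h2,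
      Finset.sum_eq_sum_Ico_succ_bot hkm]
    ring

lemma sum_alg (t : ℕ) (v x : ℕ → ℝ) (w : ℝ) :
    ∀ n, t ≤ n →
    (∑ i ∈ Finset.Ico t (n+1), x i * (v i - v (i+1)))
      - (x t * (v t - w) + x (t+1) * (w - v (t+1))
          + ∑ i ∈ Finset.Ico (t+2) (n+2), x i * (v (i-1) - v i))
    = (w - v (t+1)) * (x t - x (t+1))
        + ∑ i ∈ Finset.Icc (t+1) n, (v i - v (i+1)) * (x i - x (i+1)) := by
  intro n hn
  induction n, hn using Nat.le_induction with
  | base =>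
    rw [show t + 1 = t + 0 + 1 from rfl]
    rw [Finset.sum_Ico_succ_top (by omega)]
    simp
    ring
  | succ n hn ih =>
    rw [show n + 1 + 1 = (n + 1) + 1 from rfl,
      Finset.sum_Ico_succ_top (show t ≤ n + 1 by omega),
      Finset.sum_Ico_succ_top (show t + 2 ≤ n + 2 by omega),
      Finset.sum_Icc_succ_top (show t + 1 ≤ n + 1 by omega)]
    have h2 : n + 2 - 1 = n + 1 := by omega
    rw [h2]
    linarith [ih]



/-- Claim E.4: payment increase from one fabricated bid.
`A` is the step allocation rule before the miner fabricates the bid `w`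
(`A = xᵢ` on `[v_{i+1}, vᵢ)` for `j ≤ i ≤ n`, `0` on `[0, v_{n+1})`), and `A'` is the
rule after fabricating `w ∈ [v_{t+1}, v_t]` (ranks below `t` shift down by one).
Then `∫₀^{v_j} A − ∫₀^{v_j} A' = (w − v_{t+1})(x_t − x_{t+1})
  + ∑_{i=t+1}^{n} (vᵢ − v_{i+1})(xᵢ − x_{i+1})`,
which is exactly the increase in the Myerson payment of the `j`-th ranked user. -/
theorem position_auction_payment_increase
    (j t n : ℕ) (hj : 1 ≤ j) (hjt : j ≤ t) (htn : t ≤ n)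
    (v x : ℕ → ℝ) (w : ℝ)
    (hv0 : 0 ≤ v (n+1))
    (hv_mono : ∀ i, j ≤ i → i ≤ n → v (i+1) ≤ v i)
    (hw : w ∈ Set.Icc (v (t+1)) (v t))
    (A A' : ℝ → ℝ)
    (hA0 : ∀ z ∈ Set.Ico (0:ℝ) (v (n+1)), A z = 0)
    (hAi : ∀ i, j ≤ i → i ≤ n → ∀ z ∈ Set.Ico (v (i+1)) (v i), A z = x i)
    (hA'0 : ∀ z ∈ Set.Ico (0:ℝ) (v (n+1)), A' z = 0)
    (hA'low : ∀ i, t+1 ≤ i → i ≤ n → ∀ z ∈ Set.Ico (v (i+1)) (v i), A' z = x (i+1))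
    (hA'w1 : ∀ z ∈ Set.Ico (v (t+1)) w, A' z = x (t+1))
    (hA'w2 : ∀ z ∈ Set.Ico w (v t), A' z = x t)
    (hA'high : ∀ i, j ≤ i → i ≤ t-1 → ∀ z ∈ Set.Ico (v (i+1)) (v i), A' z = x i) :
    (∫ z in (0:ℝ)..(v j), A z) - (∫ z in (0:ℝ)..(v j), A' z)
      = (w - v (t+1)) * (x t - x (t+1))
        + ∑ i ∈ Finset.Icc (t+1) n, (v i - v (i+1)) * (x i - x (i+1)) := by
  -- the modified value sequence after inserting w at rank t+1
  set u : ℕ → ℝ := fun i => if i ≤ t then v i else if i = t+1 then w else v (i-1) with hu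
  have hut : ∀ i, i ≤ t → u i = v i := by
    intro i hi; simp [hu, hi]
  have hutw : u (t+1) = w := by simp [hu]
  have huhi : ∀ i, t+2 ≤ i → u i = v (i-1) := by
    intro i hi
    simp only [hu]
    rw [if_neg (by omega), if_neg (by omega)]
  -- integral of A
  obtain ⟨-, hIA⟩ := step_integral v x A (n+1) hv0 hA0 (n+1-j) j (by omega)
    (fun i hi hi' => hv_mono i hi (by omega))
    (fun i hi hi' => hAi i hi (by omega))
  -- integral of A'
  have hun2 : u (n+2) = v (n+1) := by
    rw [huhi (n+2) (by omega)]
    congr 1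
  have huj : u j = v j := hut j hjt
  obtain ⟨-, hIA'⟩ := step_integral u x A' (n+2) (by rw [hun2]; exact hv0)
    (by rw [hun2]; exact hA'0) (n+2-j) j (by omega)
    (by
      intro i hi hi'
      rcases lt_trichotomy i t with h | h | h
      · rw [hut i (by omega), hut (i+1) (by omega)]
        exact hv_mono i hi (by omega)
      · subst h
        rw [hut i le_rfl, hutw]
        exact hw.2
      · rcases eq_or_lt_of_le (show t+1 ≤ i by omega) with h1 | h1
        · subst h1
          rw [hutw, huhi (t+1+1) (by omega)]
          simpa using hw.1
        · rw [huhi i (by omega), huhi (i+1) (by omega),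
            show i + 1 - 1 = i from rfl]
          have h2 : i - 1 + 1 = i := by omega
          calc v i = v ((i-1)+1) := by rw [h2]
            _ ≤ v (i-1) := hv_mono (i-1) (by omega) (by omega))
    (by
      intro i hi hi' z hz
      rcases lt_trichotomy i t with h | h | h
      · rw [hut i (by omega), hut (i+1) (by omega)] at hz
        exact hA'high i hi (by omega) z hz
      · subst h
        rw [hut i le_rfl, hutw] at hz
        exact hA'w2 z hz
      · rcases eq_or_lt_of_le (show t+1 ≤ i by omega) with h1 | h1
        · subst h1
          rw [hutw, huhi (t+1+1) (by omega)] at hz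
          exact hA'w1 z (by simpa using hz)
        · rw [huhi i (by omega), huhi (i+1) (by omega),
            show i + 1 - 1 = i from rfl] at hz
          have hx := hA'low (i-1) (by omega) (by omega) z (by
            rwa [show i - 1 + 1 = i from by omega])
          rwa [show i - 1 + 1 = i from by omega] at hx)
  rw [huj] at hIA'
  rw [hIA, hIA']
  -- split both sums at t
  rw [← Finset.sum_Ico_consecutive _ (show j ≤ t by omega) (show t ≤ n+1 by omega),
    ← Finset.sum_Ico_consecutive _ (show j ≤ t by omega) (show t ≤ n+2 by omega)]
  have hcongr : ∑ i ∈ Finset.Ico j t, x i * (u i - u (i+1))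
      = ∑ i ∈ Finset.Ico j t, x i * (v i - v (i+1)) := by
    refine Finset.sum_congr rfl fun i hi => ?_
    simp only [Finset.mem_Ico] at hi
    rw [hut i (by omega), hut (i+1) (by omega)]
  rw [hcongr]
  -- peel off the two bottom terms of the second tail sum
  rw [Finset.sum_eq_sum_Ico_succ_bot (show t < n+2 by omega),
    Finset.sum_eq_sum_Ico_succ_bot (show t+1 < n+2 by omega),
    hut t le_rfl, hutw, huhi (t+2) (by omega), show t+2-1 = t+1 from rfl]
  have hcongr2 : ∑ i ∈ Finset.Ico (t+2) (n+2), x i * (u i - u (i+1))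
      = ∑ i ∈ Finset.Ico (t+2) (n+2), x i * (v (i-1) - v i) := by
    refine Finset.sum_congr rfl fun i hi => ?_
    simp only [Finset.mem_Ico] at hi
    rw [huhi i (by omega), huhi (i+1) (by omega), show i+1-1 = i from rfl]
  rw [hcongr2]
  have := sum_alg t v x w n htn
  linarith [this]
end

section
/- Let t ≤ n be positive integers, let β ≥ 0 and r ≥ β be reals, let w ≥ v_{t+1} ≥ v_{t+2} ≥ ⋯ ≥ v_{n+1} = r be reals, and let x_t ≥ x_{t+1} ≥ ⋯ ≥ x_{n+1} ≥ 0 be reals. Then t·(w − v_{t+1})·(x_t − x_{t+1}) + ∑_{i=t+1}^{n} (i−1)·(v_i − v_{i+1})·(x_i − x_{i+1}) − ∑_{i=t+1}^{n} v_{i+1}·(x_i − x_{i+1}) − β·x_{n+1} ≤ max_{t ≤ t̂ ≤ n} [ t̂·(w − r)·(x_{t̂} − x_{t̂+1}) − β·x_{t̂+1} ]. -/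
private lemma tele_sum (f : ℕ → ℝ) (a : ℕ) : ∀ b, a ≤ b + 1 →
    ∑ i ∈ Finset.Icc a b, (f i - f (i+1)) = f a - f (b+1) := by
  intro b
  induction b with
  | zero =>
      intro h
      interval_cases a <;> simp
  | succ b ih =>
      intro h
      rcases Nat.lt_or_ge a (b+2) with h' | h'
      · rw [Finset.sum_Icc_succ_top (by omega : a ≤ b+1), ih (by omega)]
        ring
      · have ha : a = b + 2 := by omega
        subst ha
        simp

/-- key inequality of Lemma E.3, `thm:PositionFakeBids`.
The miner's net revenue change from fabricating a single bid `w` facing lower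
bids `v_{t+1} ≥ ⋯ ≥ v_{n+1} = r` (with reserve `r ≥ β ≥ 0` and rank allocations
`x_t ≥ ⋯ ≥ x_{n+1} ≥ 0`) is at most the best revenue change from fabricating `w`
below `t̂` bids that all exceed `w`, over `t ≤ t̂ ≤ n`. -/
theorem fabricating_single_lowest_bid_dominates
    (t n : ℕ) (ht : 1 ≤ t) (htn : t ≤ n)
    (β r w : ℝ) (hβ : 0 ≤ β) (hrβ : β ≤ r)
    (v x : ℕ → ℝ)
    (hw : v (t+1) ≤ w)
    (hv_mono : ∀ i, t+1 ≤ i → i ≤ n → v (i+1) ≤ v i)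
    (hvr : v (n+1) = r)
    (hx_mono : ∀ i, t ≤ i → i ≤ n → x (i+1) ≤ x i)
    (hx_nonneg : 0 ≤ x (n+1)) :
    (t:ℝ) * (w - v (t+1)) * (x t - x (t+1))
      + ∑ i ∈ Finset.Icc (t+1) n, ((i:ℝ) - 1) * (v i - v (i+1)) * (x i - x (i+1))
      - ∑ i ∈ Finset.Icc (t+1) n, v (i+1) * (x i - x (i+1))
      - β * x (n+1)
    ≤ (Finset.Icc t n).sup' (Finset.nonempty_Icc.mpr htn)
        (fun i => (i:ℝ) * (w - r) * (x i - x (i+1)) - β * x (i+1)) := by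
  -- x is antitone on [t, n+1], compared to x (t+1)
  have hxle : ∀ j, t+1 ≤ j → j ≤ n+1 → x j ≤ x (t+1) := by
    intro j hj
    induction j, hj using Nat.le_induction with
    | base => intro _; exact le_refl _
    | succ k hk ih =>
        intro hk2
        exact le_trans (hx_mono k (by omega) (by omega)) (ih (by omega))
  -- r ≤ v j for all j in [t+1, n+1]
  have hrvAux : ∀ m j, t+1 ≤ j → j + m = n+1 → r ≤ v j := by
    intro m
    induction m with
    | zero =>
        intro j h1 h2
        have : j = n+1 := by omega
        subst this; exact hvr.ge
    | succ m ih =>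
        intro j h1 h2
        exact le_trans (ih (j+1) (by omega) (by omega)) (hv_mono j h1 (by omega))
  have hrv : ∀ j, t+1 ≤ j → j ≤ n+1 → r ≤ v j := fun j h1 h2 =>
    hrvAux (n+1-j) j h1 (by omega)
  -- pick the maximizer of i * (x i - x (i+1))
  obtain ⟨m, hmmem, hmmax⟩ := Finset.exists_max_image (Finset.Icc t n)
    (fun i => (i:ℝ) * (x i - x (i+1))) ⟨t, Finset.mem_Icc.mpr ⟨le_refl t, htn⟩⟩
  set M : ℝ := (m:ℝ) * (x m - x (m+1)) with hMdef
  obtain ⟨hmt, hmn⟩ := Finset.mem_Icc.mp hmmem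
  have hMt : (t:ℝ) * (x t - x (t+1)) ≤ M :=
    hmmax t (Finset.mem_Icc.mpr ⟨le_refl t, htn⟩)
  have hDt : 0 ≤ x t - x (t+1) := sub_nonneg.mpr (hx_mono t (le_refl t) htn)
  have hM0 : 0 ≤ M := le_trans (mul_nonneg (Nat.cast_nonneg t) hDt) hMt
  -- telescoping values
  have htelx : ∑ i ∈ Finset.Icc (t+1) n, (x i - x (i+1)) = x (t+1) - x (n+1) :=
    tele_sum x (t+1) n (by omega)
  have htelv : ∑ i ∈ Finset.Icc (t+1) n, (v i - v (i+1)) = v (t+1) - r := by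
    rw [tele_sum v (t+1) n (by omega), hvr]
  -- Step A : burn bound on the payment sum
  have hA : β * (x (t+1) - x (n+1)) ≤ ∑ i ∈ Finset.Icc (t+1) n, v (i+1) * (x i - x (i+1)) := by
    rw [← htelx, Finset.mul_sum]
    apply Finset.sum_le_sum
    intro i hi
    obtain ⟨hi1, hi2⟩ := Finset.mem_Icc.mp hi
    have hDi : 0 ≤ x i - x (i+1) := sub_nonneg.mpr (hx_mono i (by omega) hi2)
    have : β ≤ v (i+1) := le_trans hrβ (hrv (i+1) (by omega) (by omega))
    exact mul_le_mul_of_nonneg_right this hDi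
  -- Step B : bound the marginal-revenue sum by M
  have hB : ∑ i ∈ Finset.Icc (t+1) n, ((i:ℝ) - 1) * (v i - v (i+1)) * (x i - x (i+1))
      ≤ (v (t+1) - r) * M := by
    rw [← htelv, Finset.sum_mul]
    apply Finset.sum_le_sum
    intro i hi
    obtain ⟨hi1, hi2⟩ := Finset.mem_Icc.mp hi
    have hDi : 0 ≤ x i - x (i+1) := sub_nonneg.mpr (hx_mono i (by omega) hi2)
    have hEi : 0 ≤ v i - v (i+1) := sub_nonneg.mpr (hv_mono i hi1 hi2)
    have h1 : ((i:ℝ) - 1) * (x i - x (i+1)) ≤ M := by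
      have h2 : (i:ℝ) * (x i - x (i+1)) ≤ M :=
        hmmax i (Finset.mem_Icc.mpr ⟨by omega, hi2⟩)
      nlinarith
    calc ((i:ℝ) - 1) * (v i - v (i+1)) * (x i - x (i+1))
        = (v i - v (i+1)) * (((i:ℝ) - 1) * (x i - x (i+1))) := by ring
      _ ≤ (v i - v (i+1)) * M := mul_le_mul_of_nonneg_left h1 hEi
  -- Step C : front term
  have hC : (t:ℝ) * (w - v (t+1)) * (x t - x (t+1)) ≤ (w - v (t+1)) * M := by
    have h1 : 0 ≤ w - v (t+1) := sub_nonneg.mpr hw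
    calc (t:ℝ) * (w - v (t+1)) * (x t - x (t+1))
        = (w - v (t+1)) * ((t:ℝ) * (x t - x (t+1))) := by ring
      _ ≤ (w - v (t+1)) * M := mul_le_mul_of_nonneg_left hMt h1
  -- combine
  have hx1 : x (m+1) ≤ x (t+1) := hxle (m+1) (by omega) (by omega)
  have hfinal : (t:ℝ) * (w - v (t+1)) * (x t - x (t+1))
      + ∑ i ∈ Finset.Icc (t+1) n, ((i:ℝ) - 1) * (v i - v (i+1)) * (x i - x (i+1))
      - ∑ i ∈ Finset.Icc (t+1) n, v (i+1) * (x i - x (i+1))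
      - β * x (n+1)
      ≤ (m:ℝ) * (w - r) * (x m - x (m+1)) - β * x (m+1) := by
    have : (w - v (t+1)) * M + (v (t+1) - r) * M = (w - r) * M := by ring
    have hMeq : (w - r) * M = (m:ℝ) * (w - r) * (x m - x (m+1)) := by
      rw [hMdef]; ring
    nlinarith [hA, hB, hC, mul_le_mul_of_nonneg_left hx1 hβ]
  exact le_trans hfinal (Finset.le_sup'
    (fun i : ℕ => (i:ℝ) * (w - r) * (x i - x (i+1)) - β * x (i+1)) hmmem)
end

section
/- Let n ≥ 1, let x_1, …, x_n : [0,∞) → [0,1] be measurable functions satisfying x_1(z) ≥ x_2(z) ≥ ⋯ ≥ x_n(z) for every z ≥ 0, and let v_1 ≥ v_2 ≥ ⋯ ≥ v_n ≥ v_{n+1} = 0 be reals. Then ∑_{i=1}^{n} i·∫_{v_{i+1}}^{v_i} x_i(z) dz ≤ ∑_{i=1}^{n} ∫₀^{v_i} x_i(z) dz. -/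
/-- Appendix D.2.2: payments dominate burn in generalized
position auctions. For pointwise-decreasing single-agent allocation rules
`x₁ ≥ x₂ ≥ ⋯ ≥ xₙ` with values in `[0,1]` and sorted values
`v₁ ≥ ⋯ ≥ vₙ ≥ v_{n+1} = 0`,
`∑_{i=1}^{n} i·∫_{v_{i+1}}^{v_i} xᵢ ≤ ∑_{i=1}^{n} ∫₀^{v_i} xᵢ`. -/
theorem generalized_position_payment_ge_burn
    (n : ℕ) (hn : 1 ≤ n)
    (x : ℕ → ℝ → ℝ)
    (hx_meas : ∀ i, 1 ≤ i → i ≤ n → Measurable (x i))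
    (hx_mem : ∀ i, 1 ≤ i → i ≤ n → ∀ z : ℝ, 0 ≤ z → x i z ∈ Set.Icc (0:ℝ) 1)
    (hx_dec : ∀ i, 1 ≤ i → i < n → ∀ z : ℝ, 0 ≤ z → x (i+1) z ≤ x i z)
    (v : ℕ → ℝ)
    (hv_mono : ∀ i, 1 ≤ i → i ≤ n → v (i+1) ≤ v i)
    (hv0 : v (n+1) = 0) :
    ∑ i ∈ Finset.Icc 1 n, (i:ℝ) * ∫ z in (v (i+1))..(v i), x i z
      ≤ ∑ i ∈ Finset.Icc 1 n, ∫ z in (0:ℝ)..(v i), x i z := by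
  -- values v j ≤ v i for i ≤ j within range
  have hv_le : ∀ i j, 1 ≤ i → i ≤ j → j ≤ n + 1 → v j ≤ v i := by
    intro i j hi hij hjn
    induction j with
    | zero => omega
    | succ k ih =>
      rcases Nat.lt_or_ge i (k+1) with h | h
      · have hk : 1 ≤ k := by omega
        exact le_trans (hv_mono k hk (by omega)) (ih (by omega) (by omega))
      · have : i = k + 1 := by omega
        simp [this]
  have hv_nonneg : ∀ i, 1 ≤ i → i ≤ n + 1 → 0 ≤ v i := by
    intro i hi hin
    have := hv_le i (n+1) hi (by omega) (le_refl _)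
    rw [hv0] at this; exact this
  -- integrability on intervals within [0, ∞)
  have hint : ∀ i, 1 ≤ i → i ≤ n → ∀ a b : ℝ, 0 ≤ a → a ≤ b →
      IntervalIntegrable (x i) MeasureTheory.volume a b := by
    intro i hi1 hi2 a b ha hab
    rw [intervalIntegrable_iff_integrableOn_Ioc_of_le hab]
    apply MeasureTheory.Measure.integrableOn_of_bounded (M := 1)
      measure_Ioc_lt_top.ne (hx_meas i hi1 hi2).aestronglyMeasurable
    filter_upwards [MeasureTheory.ae_restrict_mem measurableSet_Ioc] with z hz
    have hmem := hx_mem i hi1 hi2 z (le_trans ha hz.1.le)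
    rw [Real.norm_eq_abs, abs_le]
    exact ⟨by linarith [hmem.1], hmem.2⟩
  -- pointwise monotonicity across indices
  have hx_le : ∀ i j, 1 ≤ i → i ≤ j → j ≤ n → ∀ z : ℝ, 0 ≤ z → x j z ≤ x i z := by
    intro i j hi hij hjn z hz
    induction j with
    | zero => omega
    | succ k ih =>
      rcases Nat.lt_or_ge i (k+1) with h | h
      · exact le_trans (hx_dec k (by omega) (by omega) z hz) (ih (by omega) (by omega))
      · have : i = k + 1 := by omega
        simp [this]
  -- telescoping: ∫₀^{v i} x i = ∑_{j=i}^{n} ∫_{v(j+1)}^{v j} x i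
  have htel : ∀ i, 1 ≤ i → i ≤ n →
      (∫ z in (0:ℝ)..(v i), x i z)
        = ∑ j ∈ Finset.Icc i n, ∫ z in (v (j+1))..(v j), x i z := by
    intro i hi1 hi2
    have key : ∀ m, i + m ≤ n + 1 →
        (∫ z in (v (i+m))..(v i), x i z)
          = ∑ j ∈ Finset.Ico i (i+m), ∫ z in (v (j+1))..(v j), x i z := by
      intro m
      induction m with
      | zero => simp
      | succ m ih =>
        intro hm
        have h1 : IntervalIntegrable (x i) MeasureTheory.volume (v (i+m+1)) (v (i+m)) :=
          hint i hi1 hi2 _ _ (hv_nonneg _ (by omega) (by omega))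
            (hv_mono (i+m) (by omega) (by omega))
        have h2 : IntervalIntegrable (x i) MeasureTheory.volume (v (i+m)) (v i) :=
          hint i hi1 hi2 _ _ (hv_nonneg _ (by omega) (by omega))
            (hv_le i (i+m) hi1 (by omega) (by omega))
        have hadd := intervalIntegral.integral_add_adjacent_intervals h1 h2
        have : (i + (m+1)) = (i + m) + 1 := by ring
        rw [this, ← hadd, Finset.sum_Ico_succ_top (by omega), ← ih (by omega)]
        ring
    have := key (n + 1 - i) (by omega)
    rw [show i + (n + 1 - i) = n + 1 by omega] at this
    rw [hv0] at this
    rw [this, Finset.Ico_add_one_right_eq_Icc]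
  -- rewrite RHS and compare term by term after swapping sums
  have hrhs : ∑ i ∈ Finset.Icc 1 n, ∫ z in (0:ℝ)..(v i), x i z
      = ∑ j ∈ Finset.Icc 1 n, ∑ i ∈ Finset.Icc 1 j, ∫ z in (v (j+1))..(v j), x i z := by
    have h1 : ∑ i ∈ Finset.Icc 1 n, ∫ z in (0:ℝ)..(v i), x i z
        = ∑ i ∈ Finset.Icc 1 n, ∑ j ∈ Finset.Icc i n, ∫ z in (v (j+1))..(v j), x i z :=
      Finset.sum_congr rfl (fun i hi =>
        htel i (Finset.mem_Icc.mp hi).1 (Finset.mem_Icc.mp hi).2)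
    rw [h1]
    exact Finset.sum_comm' (fun i j => by simp only [Finset.mem_Icc]; omega)
  rw [hrhs]
  apply Finset.sum_le_sum
  intro j hj
  rw [Finset.mem_Icc] at hj
  have hcard : ((j:ℝ)) * ∫ z in (v (j+1))..(v j), x j z
      = ∑ _i ∈ Finset.Icc 1 j, ∫ z in (v (j+1))..(v j), x j z := by
    rw [Finset.sum_const, Nat.card_Icc]
    simp [nsmul_eq_mul]
  rw [hcard]
  apply Finset.sum_le_sum
  intro i hi
  rw [Finset.mem_Icc] at hi
  have hab : v (j+1) ≤ v j := hv_mono j hj.1 hj.2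
  apply intervalIntegral.integral_mono_on hab
    (hint j hj.1 hj.2 _ _ (hv_nonneg _ (by omega) (by omega)) hab)
    (hint i hi.1 (by omega) _ _ (hv_nonneg _ (by omega) (by omega)) hab)
  intro z hz
  exact hx_le i j hi.1 hi.2 hj.2 z (le_trans (hv_nonneg _ (by omega) (by omega)) hz.1)
end

section
/- Let t ≤ n be positive integers, let g_t, g_{t+1}, …, g_n : ℝ → [0,∞) be functions, each integrable on bounded intervals, satisfying i·g_i(z) ≤ t·g_t(z) for every z and every t ≤ i ≤ n, and let v_{n+1} ≤ v_n ≤ ⋯ ≤ v_{t+1} ≤ w be reals. Then ∫_{v_{t+1}}^{w} t·g_t(z) dz + ∑_{i=t+1}^{n} ∫_{v_{i+1}}^{v_i} t·g_i(z) dz ≤ ∫_{v_{n+1}}^{w} t·g_t(z) dz. -/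
open MeasureTheory

/-- integral-domination claim in the proof of Theorem 6.11.
For nonnegative locally interval-integrable `g_t, …, g_n` with `i·gᵢ(z) ≤ t·g_t(z)`
for all `z` and `t ≤ i ≤ n`, and reals `v_{n+1} ≤ ⋯ ≤ v_{t+1} ≤ w`,
`∫_{v_{t+1}}^{w} t·g_t + ∑_{i=t+1}^{n} ∫_{v_{i+1}}^{v_i} t·gᵢ ≤ ∫_{v_{n+1}}^{w} t·g_t`. -/
theorem integral_domination
    (t n : ℕ) (ht : 1 ≤ t) (htn : t ≤ n)
    (g : ℕ → ℝ → ℝ)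
    (hg_nonneg : ∀ i, t ≤ i → i ≤ n → ∀ z : ℝ, 0 ≤ g i z)
    (hg_int : ∀ i, t ≤ i → i ≤ n → ∀ a b : ℝ, IntervalIntegrable (g i) volume a b)
    (hg_dom : ∀ i, t ≤ i → i ≤ n → ∀ z : ℝ, (i:ℝ) * g i z ≤ (t:ℝ) * g t z)
    (v : ℕ → ℝ) (w : ℝ)
    (hv_mono : ∀ i, t+1 ≤ i → i ≤ n → v (i+1) ≤ v i)
    (hvw : v (t+1) ≤ w) :
    (∫ z in (v (t+1))..w, (t:ℝ) * g t z)
      + ∑ i ∈ Finset.Icc (t+1) n, ∫ z in (v (i+1))..(v i), (t:ℝ) * g i z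
    ≤ ∫ z in (v (n+1))..w, (t:ℝ) * g t z := by
  induction n, htn using Nat.le_induction with
  | base =>
    rw [Finset.Icc_eq_empty (by omega)]
    simp
  | succ n hn IH =>
    have hIH := IH (fun i h1 h2 => hg_nonneg i h1 (by omega))
      (fun i h1 h2 => hg_int i h1 (by omega))
      (fun i h1 h2 => hg_dom i h1 (by omega))
      (fun i h1 h2 => hv_mono i h1 (by omega))
    rw [Finset.sum_Icc_succ_top (by omega)]
    have hle : v (n+2) ≤ v (n+1) := hv_mono (n+1) (by omega) (le_refl _)
    have hint_t : ∀ a b : ℝ, IntervalIntegrable (fun z => (t:ℝ) * g t z) volume a b :=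
      fun a b => (hg_int t (le_refl _) (by omega) a b).const_mul _
    have hint_n : IntervalIntegrable (fun z => (t:ℝ) * g (n+1) z) volume (v (n+2)) (v (n+1)) :=
      (hg_int (n+1) (by omega) (le_refl _) _ _).const_mul _
    have hterm : (∫ z in (v (n+2))..(v (n+1)), (t:ℝ) * g (n+1) z)
        ≤ ∫ z in (v (n+2))..(v (n+1)), (t:ℝ) * g t z := by
      apply intervalIntegral.integral_mono_on hle hint_n (hint_t _ _)
      intro z _
      have h1 := hg_dom (n+1) (by omega) (le_refl _) z
      have h2 := hg_nonneg (n+1) (by omega) (le_refl _) z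
      have h3 : (t:ℝ) ≤ (n+1:ℕ) := by exact_mod_cast by omega
      nlinarith [h3]
    have hsplit : (∫ z in (v (n+2))..(v (n+1)), (t:ℝ) * g t z)
        + (∫ z in (v (n+1))..w, (t:ℝ) * g t z)
        = ∫ z in (v (n+2))..w, (t:ℝ) * g t z :=
      intervalIntegral.integral_add_adjacent_intervals (hint_t _ _) (hint_t _ _)
    have : v (n+1+1) = v (n+2) := rfl
    linarith
end
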